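/- Discounted-to-average limit for finite deterministic MDPs: for a finite state space S, finite action set, deterministic transitions and bounded cost, letting V_α be the optimal α-discounted value function and u_α(s) = V_α(s) − V_α(s₀) for a fixed reference state s₀, every sequence α_n ↑ 1 admits a subsequence along which u_{α_n} converges pointwise to a function V, and (1−α_n)V_{α_n}(s₀) converges to a constant ρ* satisfying the average optimality equation ρ* + V(s) = min_a [c(s,a) + V(f(s,a))] for all s ∈ S. -/

import Mathlib

open Filter

lemma inf'_add_const {A : Type} (s : Finset A) (hne : s.Nonempty) (g : A → ℝ) (k : ℝ) :
    s.inf' hne (fun a => g a + k) = s.inf' hne g + k := by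
  induction hne using Finset.Nonempty.cons_induction with
  | singleton a => simp
  | cons a t ha hs ih =>
      rw [Finset.inf'_cons hs, Finset.inf'_cons hs, ih, min_add_add_right]

/-- Vanishing-discount limit for finite deterministic MDPs: if `V α` is the α-discounted
optimal value and the relative values `V α · - V α s₀` are uniformly bounded, then every
sequence `αₙ → 1` in `(0,1)` has a subsequence along which the relative values converge
pointwise to some `V` and `(1-αₙ) V_{αₙ}(s₀)` converges to some `ρ*` satisfying the
average optimality equation `ρ* + V(s) = min_a [c(s,a) + V(f(s,a))]`. -/
theorem vanishing_discount_average_optimality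
    (S A : Type) [Fintype S] [Nonempty S] [Fintype A] [Nonempty A]
    (f : S × A → S) (c : S × A → ℝ) (s₀ : S)
    (V : ℝ → S → ℝ)
    (hV : ∀ α ∈ Set.Ioo (0 : ℝ) 1, ∀ s : S,
      V α s = Finset.univ.inf' Finset.univ_nonempty fun a : A => c (s, a) + α * V α (f (s, a)))
    (hub : ∃ M : ℝ, ∀ α ∈ Set.Ioo (0 : ℝ) 1, ∀ s : S, |V α s - V α s₀| ≤ M) :
    ∀ αseq : ℕ → ℝ, (∀ n, αseq n ∈ Set.Ioo (0 : ℝ) 1) → Tendsto αseq atTop (nhds 1) →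
      ∃ φ : ℕ → ℕ, StrictMono φ ∧ ∃ (Vlim : S → ℝ) (ρstar : ℝ),
        (∀ s : S, Tendsto (fun n => V (αseq (φ n)) s - V (αseq (φ n)) s₀)
            atTop (nhds (Vlim s))) ∧
        Tendsto (fun n => (1 - αseq (φ n)) * V (αseq (φ n)) s₀) atTop (nhds ρstar) ∧
        (∀ s : S, ρstar + Vlim s =
          Finset.univ.inf' Finset.univ_nonempty fun a : A => c (s, a) + Vlim (f (s, a))) := by
  intro αseq hmem hα
  obtain ⟨M, hM⟩ := hub
  obtain ⟨C, hC⟩ := Finite.exists_le (fun p : S × A => |c p|)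
  have hCnn : 0 ≤ C := le_trans (abs_nonneg _) (hC (s₀, Classical.arbitrary A))
  set u : ℕ → S → ℝ := fun n s => V (αseq n) s - V (αseq n) s₀ with hu
  set ρ : ℕ → ℝ := fun n => (1 - αseq n) * V (αseq n) s₀ with hρ
  -- key Bellman identity for relative values
  have key : ∀ n (s : S), ρ n + u n s =
      Finset.univ.inf' Finset.univ_nonempty
        fun a : A => c (s, a) + αseq n * u n (f (s, a)) := by
    intro n s
    have h1 := hV (αseq n) (hmem n) s
    have : (Finset.univ.inf' Finset.univ_nonempty
        fun a : A => c (s, a) + αseq n * u n (f (s, a)))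
        = (Finset.univ.inf' Finset.univ_nonempty
        fun a : A => c (s, a) + αseq n * V (αseq n) (f (s, a)))
          + (- (αseq n * V (αseq n) s₀)) := by
      rw [← inf'_add_const]
      congr 1; funext a; simp only [hu]; ring
    rw [this, ← h1, hρ, hu]; ring
  -- bounds
  have hMnn : 0 ≤ M := le_trans (abs_nonneg _) (hM (αseq 0) (hmem 0) s₀)
  have hρbd : ∀ n, |ρ n| ≤ C + M := by
    intro n
    have h := key n s₀
    simp only [hu, sub_self, add_zero] at h
    rw [h]
    obtain ⟨a, -, ha⟩ := Finset.exists_mem_eq_inf' (Finset.univ_nonempty (α := A))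
      (fun a : A => c (s₀, a) + αseq n * u n (f (s₀, a)))
    rw [ha]
    have hα1 : |αseq n| ≤ 1 := by
      have := hmem n; rw [abs_of_pos this.1]; exact le_of_lt this.2
    calc |c (s₀, a) + αseq n * u n (f (s₀, a))|
        ≤ |c (s₀, a)| + |αseq n * u n (f (s₀, a))| := abs_add_le _ _
      _ ≤ C + M := by
          refine add_le_add (hC _) ?_
          rw [abs_mul]
          calc |αseq n| * |u n (f (s₀, a))| ≤ 1 * M := by
                exact mul_le_mul hα1 (hM _ (hmem n) _) (abs_nonneg _) zero_le_one
            _ = M := one_mul M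
  -- compactness in (S → ℝ) × ℝ
  set x : ℕ → (S → ℝ) × ℝ := fun n => (u n, ρ n) with hx
  have hbdd : ∀ n, x n ∈ Metric.closedBall (0 : (S → ℝ) × ℝ) (C + M) := by
    intro n
    rw [Metric.mem_closedBall, dist_zero_right, Prod.norm_def, max_le_iff]
    constructor
    · rw [pi_norm_le_iff_of_nonneg (by linarith)]
      intro s
      calc ‖u n s‖ ≤ M := hM _ (hmem n) s
        _ ≤ C + M := by linarith [le_trans (abs_nonneg (c (s₀, Classical.arbitrary A))) (hC (s₀, Classical.arbitrary A))]
    · exact hρbd n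
  obtain ⟨l, -, φ, hφ, hconv⟩ :=
    tendsto_subseq_of_bounded Metric.isBounded_closedBall hbdd
  refine ⟨φ, hφ, l.1, l.2, ?_, ?_, ?_⟩
  · intro s
    have h1 : Tendsto (fun n => (x (φ n)).1 s) atTop (nhds (l.1 s)) :=
      ((continuous_apply s).tendsto _).comp (((continuous_fst).tendsto _).comp hconv)
    exact h1
  · exact ((continuous_snd).tendsto _).comp hconv
  · intro s
    have hαφ : Tendsto (fun n => αseq (φ n)) atTop (nhds 1) :=
      hα.comp hφ.tendsto_atTop
    have hus : ∀ t : S, Tendsto (fun n => u (φ n) t) atTop (nhds (l.1 t)) := by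
      intro t
      exact ((continuous_apply t).tendsto _).comp (((continuous_fst).tendsto _).comp hconv)
    have hρs : Tendsto (fun n => ρ (φ n)) atTop (nhds l.2) :=
      ((continuous_snd).tendsto _).comp hconv
    have hL : Tendsto (fun n => ρ (φ n) + u (φ n) s) atTop (nhds (l.2 + l.1 s)) :=
      hρs.add (hus s)
    have hR : Tendsto (fun n => Finset.univ.inf' Finset.univ_nonempty
        fun a : A => c (s, a) + αseq (φ n) * u (φ n) (f (s, a))) atTop
        (nhds (Finset.univ.inf' Finset.univ_nonempty
          fun a : A => c (s, a) + l.1 (f (s, a)))) := by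
      have : ∀ a ∈ (Finset.univ : Finset A),
          Tendsto (fun n => c (s, a) + αseq (φ n) * u (φ n) (f (s, a))) atTop
            (nhds (c (s, a) + l.1 (f (s, a)))) := by
        intro a _
        have h2 : Tendsto (fun n => c (s, a) + αseq (φ n) * u (φ n) (f (s, a))) atTop
            (nhds (c (s, a) + 1 * l.1 (f (s, a)))) :=
          (tendsto_const_nhds (x := c (s, a))).add (hαφ.mul (hus (f (s, a))))
        simpa using h2
      exact Filter.Tendsto.finset_inf'_nhds_apply Finset.univ_nonempty this
    have := tendsto_nhds_unique (hL.congr (fun n => key (φ n) s)) hR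
    exact this
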